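/- Suppose r ≥ 8 is even and m = r/2 − 1 (so n = 4), and let q be the canonical coefficient family with parameter λ ≠ 0. Let p ∈ ℂ^{r+1} have coordinates p_0 = p_{m−1} = 1 and p_i = 0 otherwise. Then Q_k(p) = Σ_{0≤i,j≤r} q_k(i,j)·p_i·p_j = 0 for k = 0, 1, 2, 3, 4 (so p lies on the affine cone of M_m), and the 5×(r+1) Jacobian matrix J with entries J_{k,i} = 2·q_k(i, 2m+k−i)·p_{2m+k−i} (entries with 2m+k−i outside {0,…,r} being 0) has rank 5. (This shows M_m ⊆ ℙ^r has codimension 5, hence degree 32.) -/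

import Mathlib

open Finset

noncomputable section

/-- `famN r m = 2r - 4m`, the highest weight `n` of the target representation. -/
def famN (r m : ℕ) : ℤ := 2 * (r : ℤ) - 4 * (m : ℤ)

/-- A *coefficient family* for parameters `r, m`: a function `q k i j` (complex valued,
indices integers) that vanishes whenever `(k,i,j)` is out of range
(`0 ≤ k ≤ n`, `0 ≤ i,j ≤ r`, where `n = 2r - 4m`) and satisfies the sl₂-compatibility
relations (R1), (R2), (R3) for all admissible indices. -/
def IsCoeffFamily (r m : ℕ) (q : ℤ → ℤ → ℤ → ℂ) : Prop :=
  (∀ k i j : ℤ,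
      ¬(0 ≤ k ∧ k ≤ famN r m ∧ 0 ≤ i ∧ i ≤ (r : ℤ) ∧ 0 ≤ j ∧ j ≤ (r : ℤ)) →
      q k i j = 0) ∧
  (∀ k i j : ℤ, 0 ≤ k → k ≤ famN r m → 0 ≤ i → i ≤ (r : ℤ) → 0 ≤ j → j ≤ (r : ℤ) →
      (k : ℂ) * q (k - 1) i j
        = ((i : ℂ) + 1) * q k (i + 1) j + ((j : ℂ) + 1) * q k i (j + 1)) ∧
  (∀ k i j : ℤ, 0 ≤ k → k ≤ famN r m → 0 ≤ i → i ≤ (r : ℤ) → 0 ≤ j → j ≤ (r : ℤ) →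
      ((famN r m - k : ℤ) : ℂ) * q (k + 1) i j
        = (((r : ℤ) - i + 1 : ℤ) : ℂ) * q k (i - 1) j
          + (((r : ℤ) - j + 1 : ℤ) : ℂ) * q k i (j - 1)) ∧
  (∀ k i j : ℤ, 0 ≤ k → k ≤ famN r m → 0 ≤ i → i ≤ (r : ℤ) → 0 ≤ j → j ≤ (r : ℤ) →
      ((famN r m - 2 * k - 2 * (r : ℤ) + 2 * i + 2 * j : ℤ) : ℂ) * q k i j = 0)

/-- Binomial coefficient `binom a b` for integers, interpreted as `0` when `b` is out of
the range `0 ≤ b ≤ a`, as a complex number. -/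
def binomZ (a b : ℤ) : ℂ :=
  if 0 ≤ b ∧ b ≤ a then (Nat.choose a.toNat b.toNat : ℂ) else 0

/-- The *canonical coefficient family* with parameter `λ`: the coefficient family whose
level-0 component is `q₀ i j = (-1)^i * binom (2m) i * λ` if `i + j = 2m` and `0`
otherwise. -/
def IsCanonical (r m : ℕ) (lam : ℂ) (q : ℤ → ℤ → ℤ → ℂ) : Prop :=
  IsCoeffFamily r m q ∧
  ∀ i j : ℤ, 0 ≤ i → i ≤ (r : ℤ) → 0 ≤ j → j ≤ (r : ℤ) →
    q 0 i j =
      if i + j = 2 * (m : ℤ) then (-1) ^ i.toNat * binomZ (2 * (m : ℤ)) i * lam else 0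
/-- The point `p` with `p_0 = p_{m-1} = 1` and all other coordinates `0`. -/
def pPoint (m : ℕ) : ℤ → ℂ := fun i => if i = 0 ∨ i = (m : ℤ) - 1 then 1 else 0

set_option maxHeartbeats 1000000 in
/-- for `r ≥ 8` even, `m = r/2 - 1` (so `n = 4`), the point `p` with
`p_0 = p_{m-1} = 1` lies on the affine cone of `M_m` and the Jacobian of
`(Q_0, …, Q_4)` at `p` has rank `5` (hence `M_m` has codimension `5` and degree `32`). -/
theorem stmt15 (r m : ℕ) (hr : 8 ≤ r) (hrm : r = 2 * m + 2)
    (lam : ℂ) (hlam : lam ≠ 0)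
    (q : ℤ → ℤ → ℤ → ℂ) (hq : IsCanonical r m lam q) :
    (∀ k : ℤ, 0 ≤ k → k ≤ 4 →
      ∑ i ∈ Finset.Icc (0 : ℤ) (r : ℤ), ∑ j ∈ Finset.Icc (0 : ℤ) (r : ℤ),
        q k i j * pPoint m i * pPoint m j = 0) ∧
    (Matrix.of fun (k : Fin 5) (i : Fin (r + 1)) =>
        2 * q ((k : ℕ) : ℤ) ((i : ℕ) : ℤ)
            (2 * (m : ℤ) + ((k : ℕ) : ℤ) - ((i : ℕ) : ℤ))
          * pPoint m (2 * (m : ℤ) + ((k : ℕ) : ℤ) - ((i : ℕ) : ℤ))).rank = 5 := by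
  obtain ⟨⟨hz, hR1, hR2, hR3⟩, h0⟩ := hq
  have hm3 : 3 ≤ m := by omega
  have hfam : famN r m = 4 := by rw [famN, hrm]; push_cast; ring
  simp only [hfam] at hz hR2 hR3
  have hr' : (r:ℤ) = 2*(m:ℤ)+2 := by omega
  have hzero : ∀ k i j : ℤ, 0 ≤ k → k ≤ 4 → i + j ≠ 2*(m:ℤ) + k → q k i j = 0 := by
    intro k i j hk hk4 hne
    by_cases hrg : 0 ≤ i ∧ i ≤ (r:ℤ) ∧ 0 ≤ j ∧ j ≤ (r:ℤ)
    · obtain ⟨h1, h2, h3, h4⟩ := hrg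
      have h5 := hR3 k i j hk hk4 h1 h2 h3 h4
      have h6 : ((4 - 2*k - 2*(r:ℤ) + 2*i + 2*j : ℤ) : ℂ) ≠ 0 := by
        rw [Ne, Int.cast_eq_zero]; omega
      exact (mul_eq_zero.mp h5).resolve_left h6
    · exact hz k i j (by tauto)
  have hb1 : q 0 ((m:ℤ)+1) ((m:ℤ)-1) = -((-1:ℂ)^m * (Nat.choose (2*m) (m+1) : ℂ) * lam) := by
    have h := h0 ((m:ℤ)+1) ((m:ℤ)-1) (by omega) (by omega) (by omega) (by omega)
    rw [if_pos (by ring : ((m:ℤ)+1) + ((m:ℤ)-1) = 2*(m:ℤ))] at h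
    simp only [binomZ] at h
    rw [if_pos ⟨by omega, by omega⟩] at h
    rw [show ((2*(m:ℤ))).toNat = 2*m from by omega, show (((m:ℤ)+1)).toNat = m+1 from by omega, pow_add] at h
    rw [h]; ring
  have hb2 : q 0 ((m:ℤ)+2) ((m:ℤ)-2) = ((-1:ℂ)^m * (Nat.choose (2*m) (m+2) : ℂ) * lam) := by
    have h := h0 ((m:ℤ)+2) ((m:ℤ)-2) (by omega) (by omega) (by omega) (by omega)
    rw [if_pos (by ring : ((m:ℤ)+2) + ((m:ℤ)-2) = 2*(m:ℤ))] at h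
    simp only [binomZ] at h
    rw [if_pos ⟨by omega, by omega⟩] at h
    rw [show ((2*(m:ℤ))).toNat = 2*m from by omega, show (((m:ℤ)+2)).toNat = m+2 from by omega, pow_add] at h
    rw [h]; ring
  have hb3 : q 0 ((m:ℤ)+3) ((m:ℤ)-3) = -((-1:ℂ)^m * (Nat.choose (2*m) (m+3) : ℂ) * lam) := by
    have h := h0 ((m:ℤ)+3) ((m:ℤ)-3) (by omega) (by omega) (by omega) (by omega)
    rw [if_pos (by ring : ((m:ℤ)+3) + ((m:ℤ)-3) = 2*(m:ℤ))] at h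
    simp only [binomZ] at h
    rw [if_pos ⟨by omega, by omega⟩] at h
    rw [show ((2*(m:ℤ))).toNat = 2*m from by omega, show (((m:ℤ)+3)).toNat = m+3 from by omega, pow_add] at h
    rw [h]; ring
  have hb4 : q 0 ((m:ℤ)+4) ((m:ℤ)-4) = ((-1:ℂ)^m * (Nat.choose (2*m) (m+4) : ℂ) * lam) := by
    by_cases hbc : 4 ≤ m
    · have h := h0 ((m:ℤ)+4) ((m:ℤ)-4) (by omega) (by omega) (by omega) (by omega)
      rw [if_pos (by ring : ((m:ℤ)+4) + ((m:ℤ)-4) = 2*(m:ℤ))] at h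
      simp only [binomZ] at h
      rw [if_pos ⟨by omega, by omega⟩] at h
      rw [show ((2*(m:ℤ))).toNat = 2*m from by omega, show (((m:ℤ)+4)).toNat = m+4 from by omega, pow_add] at h
      rw [h]; ring
    · rw [hz 0 ((m:ℤ)+4) ((m:ℤ)-4) (by intro hcon; omega), Nat.choose_eq_zero_of_lt (show 2*m < m+4 by omega)]
      simp
  have hb5 : q 0 ((m:ℤ)+5) ((m:ℤ)-5) = -((-1:ℂ)^m * (Nat.choose (2*m) (m+5) : ℂ) * lam) := by
    by_cases hbc : 5 ≤ m
    · have h := h0 ((m:ℤ)+5) ((m:ℤ)-5) (by omega) (by omega) (by omega) (by omega)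
      rw [if_pos (by ring : ((m:ℤ)+5) + ((m:ℤ)-5) = 2*(m:ℤ))] at h
      simp only [binomZ] at h
      rw [if_pos ⟨by omega, by omega⟩] at h
      rw [show ((2*(m:ℤ))).toNat = 2*m from by omega, show (((m:ℤ)+5)).toNat = m+5 from by omega, pow_add] at h
      rw [h]; ring
    · rw [hz 0 ((m:ℤ)+5) ((m:ℤ)-5) (by intro hcon; omega), Nat.choose_eq_zero_of_lt (show 2*m < m+5 by omega)]
      simp
  have hc1 : (((m:ℂ)+1)) * (Nat.choose (2*m) (m+1) : ℂ) = ((m:ℂ)) * (Nat.choose (2*m) m : ℂ) := by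
    obtain ⟨d, rfl⟩ : ∃ d, m = d + 1 := ⟨m - 1, by omega⟩
    have h1 := Nat.choose_succ_right_eq (2*(d+1)) (d+1)
    simp only [show 2*(d+1) - (d+1) = d+1 from by omega] at h1
    have h2 : (Nat.choose (2*(d+1)) (d+1+1) : ℂ) * (((d+1+1 : ℕ)):ℂ) = (Nat.choose (2*(d+1)) (d+1) : ℂ) * (((d+1:ℕ)):ℂ) := by
      exact_mod_cast congrArg (Nat.cast : ℕ → ℂ) h1
    push_cast at h2 ⊢
    linear_combination h2
  have hc2 : (((m:ℂ)+2)) * (Nat.choose (2*m) (m+2) : ℂ) = (((m:ℂ)-1)) * (Nat.choose (2*m) (m+1) : ℂ) := by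
    obtain ⟨d, rfl⟩ : ∃ d, m = d + 2 := ⟨m - 2, by omega⟩
    have h1 := Nat.choose_succ_right_eq (2*(d+2)) (d+2+1)
    simp only [show d+2+1+1 = d+2+2 from by omega, show 2*(d+2) - (d+2+1) = d+1 from by omega] at h1
    have h2 : (Nat.choose (2*(d+2)) (d+2+2) : ℂ) * (((d+2+2 : ℕ)):ℂ) = (Nat.choose (2*(d+2)) (d+2+1) : ℂ) * (((d+1:ℕ)):ℂ) := by
      exact_mod_cast congrArg (Nat.cast : ℕ → ℂ) h1
    push_cast at h2 ⊢
    linear_combination h2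
  have hc3 : (((m:ℂ)+3)) * (Nat.choose (2*m) (m+3) : ℂ) = (((m:ℂ)-2)) * (Nat.choose (2*m) (m+2) : ℂ) := by
    obtain ⟨d, rfl⟩ : ∃ d, m = d + 3 := ⟨m - 3, by omega⟩
    have h1 := Nat.choose_succ_right_eq (2*(d+3)) (d+3+2)
    simp only [show d+3+2+1 = d+3+3 from by omega, show 2*(d+3) - (d+3+2) = d+1 from by omega] at h1
    have h2 : (Nat.choose (2*(d+3)) (d+3+3) : ℂ) * (((d+3+3 : ℕ)):ℂ) = (Nat.choose (2*(d+3)) (d+3+2) : ℂ) * (((d+1:ℕ)):ℂ) := by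
      exact_mod_cast congrArg (Nat.cast : ℕ → ℂ) h1
    push_cast at h2 ⊢
    linear_combination h2
  have hc4 : (((m:ℂ)+4)) * (Nat.choose (2*m) (m+4) : ℂ) = (((m:ℂ)-3)) * (Nat.choose (2*m) (m+3) : ℂ) := by
    by_cases hcc : 4 ≤ m
    · obtain ⟨d, rfl⟩ : ∃ d, m = d + 4 := ⟨m - 4, by omega⟩
      have h1 := Nat.choose_succ_right_eq (2*(d+4)) (d+4+3)
      simp only [show d+4+3+1 = d+4+4 from by omega, show 2*(d+4) - (d+4+3) = d+1 from by omega] at h1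
      have h2 : (Nat.choose (2*(d+4)) (d+4+4) : ℂ) * (((d+4+4 : ℕ)):ℂ) = (Nat.choose (2*(d+4)) (d+4+3) : ℂ) * (((d+1:ℕ)):ℂ) := by
        exact_mod_cast congrArg (Nat.cast : ℕ → ℂ) h1
      push_cast at h2 ⊢
      linear_combination h2
    · have hm : m = 3 := by omega
      subst hm
      norm_num [show Nat.choose (2*3) (3+4) = 0 from by decide, show Nat.choose (2*3) (3+3) = 1 from by decide]
  have hc5 : (((m:ℂ)+5)) * (Nat.choose (2*m) (m+5) : ℂ) = (((m:ℂ)-4)) * (Nat.choose (2*m) (m+4) : ℂ) := by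
    by_cases hcc : 5 ≤ m
    · obtain ⟨d, rfl⟩ : ∃ d, m = d + 5 := ⟨m - 5, by omega⟩
      have h1 := Nat.choose_succ_right_eq (2*(d+5)) (d+5+4)
      simp only [show d+5+4+1 = d+5+5 from by omega, show 2*(d+5) - (d+5+4) = d+1 from by omega] at h1
      have h2 : (Nat.choose (2*(d+5)) (d+5+5) : ℂ) * (((d+5+5 : ℕ)):ℂ) = (Nat.choose (2*(d+5)) (d+5+4) : ℂ) * (((d+1:ℕ)):ℂ) := by
        exact_mod_cast congrArg (Nat.cast : ℕ → ℂ) h1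
      push_cast at h2 ⊢
      linear_combination h2
    · have hm : m = 3 ∨ m = 4 := by omega
      rcases hm with hm | hm <;> subst hm
      · norm_num [show Nat.choose (2*3) (3+5) = 0 from by decide, show Nat.choose (2*3) (3+4) = 0 from by decide]
      · norm_num [show Nat.choose (2*4) (4+5) = 0 from by decide, show Nat.choose (2*4) (4+4) = 1 from by decide]
  have E01 : q 0 ((m:ℤ)+1) ((m:ℤ)-1) * (((m:ℂ)+1)*((m:ℂ)+2)*((m:ℂ)+3)*((m:ℂ)+4)*((m:ℂ)+5)) = (-1:ℂ)^m * lam * (Nat.choose (2*m) m : ℂ) * (-((m:ℂ)*((m:ℂ)+2)*((m:ℂ)+3)*((m:ℂ)+4)*((m:ℂ)+5))) := by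
    linear_combination (((m:ℂ)+1)*((m:ℂ)+2)*((m:ℂ)+3)*((m:ℂ)+4)*((m:ℂ)+5)) * hb1 + ((-1) * (-1:ℂ)^m * lam * (((m:ℂ)+2)*((m:ℂ)+3)*((m:ℂ)+4)*((m:ℂ)+5)) * (1)) * hc1
  have E02 : q 0 ((m:ℤ)+2) ((m:ℤ)-2) * (((m:ℂ)+1)*((m:ℂ)+2)*((m:ℂ)+3)*((m:ℂ)+4)*((m:ℂ)+5)) = (-1:ℂ)^m * lam * (Nat.choose (2*m) m : ℂ) * ((m:ℂ)*((m:ℂ)-1)*((m:ℂ)+3)*((m:ℂ)+4)*((m:ℂ)+5)) := by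
    linear_combination (((m:ℂ)+1)*((m:ℂ)+2)*((m:ℂ)+3)*((m:ℂ)+4)*((m:ℂ)+5)) * hb2 + ((1) * (-1:ℂ)^m * lam * (((m:ℂ)+3)*((m:ℂ)+4)*((m:ℂ)+5)) * (((m:ℂ)-1))) * hc1 + ((1) * (-1:ℂ)^m * lam * (((m:ℂ)+3)*((m:ℂ)+4)*((m:ℂ)+5)) * (((m:ℂ)+1))) * hc2
  have E03 : q 0 ((m:ℤ)+3) ((m:ℤ)-3) * (((m:ℂ)+1)*((m:ℂ)+2)*((m:ℂ)+3)*((m:ℂ)+4)*((m:ℂ)+5)) = (-1:ℂ)^m * lam * (Nat.choose (2*m) m : ℂ) * (-((m:ℂ)*((m:ℂ)-1)*((m:ℂ)-2)*((m:ℂ)+4)*((m:ℂ)+5))) := by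
    linear_combination (((m:ℂ)+1)*((m:ℂ)+2)*((m:ℂ)+3)*((m:ℂ)+4)*((m:ℂ)+5)) * hb3 + ((-1) * (-1:ℂ)^m * lam * (((m:ℂ)+4)*((m:ℂ)+5)) * (((m:ℂ)-1)*((m:ℂ)-2))) * hc1 + ((-1) * (-1:ℂ)^m * lam * (((m:ℂ)+4)*((m:ℂ)+5)) * (((m:ℂ)+1)*((m:ℂ)-2))) * hc2 + ((-1) * (-1:ℂ)^m * lam * (((m:ℂ)+4)*((m:ℂ)+5)) * (((m:ℂ)+1)*((m:ℂ)+2))) * hc3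
  have E04 : q 0 ((m:ℤ)+4) ((m:ℤ)-4) * (((m:ℂ)+1)*((m:ℂ)+2)*((m:ℂ)+3)*((m:ℂ)+4)*((m:ℂ)+5)) = (-1:ℂ)^m * lam * (Nat.choose (2*m) m : ℂ) * ((m:ℂ)*((m:ℂ)-1)*((m:ℂ)-2)*((m:ℂ)-3)*((m:ℂ)+5)) := by
    linear_combination (((m:ℂ)+1)*((m:ℂ)+2)*((m:ℂ)+3)*((m:ℂ)+4)*((m:ℂ)+5)) * hb4 + ((1) * (-1:ℂ)^m * lam * (((m:ℂ)+5)) * (((m:ℂ)-1)*((m:ℂ)-2)*((m:ℂ)-3))) * hc1 + ((1) * (-1:ℂ)^m * lam * (((m:ℂ)+5)) * (((m:ℂ)+1)*((m:ℂ)-2)*((m:ℂ)-3))) * hc2 + ((1) * (-1:ℂ)^m * lam * (((m:ℂ)+5)) * (((m:ℂ)+1)*((m:ℂ)+2)*((m:ℂ)-3))) * hc3 + ((1) * (-1:ℂ)^m * lam * (((m:ℂ)+5)) * (((m:ℂ)+1)*((m:ℂ)+2)*((m:ℂ)+3))) * hc4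
  have E05 : q 0 ((m:ℤ)+5) ((m:ℤ)-5) * (((m:ℂ)+1)*((m:ℂ)+2)*((m:ℂ)+3)*((m:ℂ)+4)*((m:ℂ)+5)) = (-1:ℂ)^m * lam * (Nat.choose (2*m) m : ℂ) * (-((m:ℂ)*((m:ℂ)-1)*((m:ℂ)-2)*((m:ℂ)-3)*((m:ℂ)-4))) := by
    linear_combination (((m:ℂ)+1)*((m:ℂ)+2)*((m:ℂ)+3)*((m:ℂ)+4)*((m:ℂ)+5)) * hb5 + ((-1) * (-1:ℂ)^m * lam * (1) * (((m:ℂ)-1)*((m:ℂ)-2)*((m:ℂ)-3)*((m:ℂ)-4))) * hc1 + ((-1) * (-1:ℂ)^m * lam * (1) * (((m:ℂ)+1)*((m:ℂ)-2)*((m:ℂ)-3)*((m:ℂ)-4))) * hc2 + ((-1) * (-1:ℂ)^m * lam * (1) * (((m:ℂ)+1)*((m:ℂ)+2)*((m:ℂ)-3)*((m:ℂ)-4))) * hc3 + ((-1) * (-1:ℂ)^m * lam * (1) * (((m:ℂ)+1)*((m:ℂ)+2)*((m:ℂ)+3)*((m:ℂ)-4))) * hc4 + ((-1) * (-1:ℂ)^m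 * lam * (1) * (((m:ℂ)+1)*((m:ℂ)+2)*((m:ℂ)+3)*((m:ℂ)+4))) * hc5
  have E12 : q 1 ((m:ℤ)+2) ((m:ℤ)-1) * (((m:ℂ)+1)*((m:ℂ)+2)*((m:ℂ)+3)*((m:ℂ)+4)*((m:ℂ)+5)) = (-1:ℂ)^m * lam * (Nat.choose (2*m) m : ℂ) * (-((3/2)*(m:ℂ)*((m:ℂ)+3)*((m:ℂ)+4)*((m:ℂ)+5))) := by
    have hs := hR2 0 ((m:ℤ)+2) ((m:ℤ)-1) (by norm_num) (by norm_num) (by omega) (by omega) (by omega) (by omega)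
    simp only [hr'] at hs
    simp only [show (0:ℤ)+1 = 1 from by norm_num, show ((m:ℤ)+2)-1 = ((m:ℤ)+1) from by ring, show ((m:ℤ)-1)-1 = ((m:ℤ)-2) from by ring] at hs
    push_cast at hs
    linear_combination ((((m:ℂ)+1)*((m:ℂ)+2)*((m:ℂ)+3)*((m:ℂ)+4)*((m:ℂ)+5))/4) * hs + ((((m:ℂ)+1))/4) * E01 + ((((m:ℂ)+4))/4) * E02
  have E13 : q 1 ((m:ℤ)+3) ((m:ℤ)-2) * (((m:ℂ)+1)*((m:ℂ)+2)*((m:ℂ)+3)*((m:ℂ)+4)*((m:ℂ)+5)) = (-1:ℂ)^m * lam * (Nat.choose (2*m) m : ℂ) * ((5/2)*(m:ℂ)*((m:ℂ)-1)*((m:ℂ)+4)*((m:ℂ)+5)) := by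
    have hs := hR2 0 ((m:ℤ)+3) ((m:ℤ)-2) (by norm_num) (by norm_num) (by omega) (by omega) (by omega) (by omega)
    simp only [hr'] at hs
    simp only [show (0:ℤ)+1 = 1 from by norm_num, show ((m:ℤ)+3)-1 = ((m:ℤ)+2) from by ring, show ((m:ℤ)-2)-1 = ((m:ℤ)-3) from by ring] at hs
    push_cast at hs
    linear_combination ((((m:ℂ)+1)*((m:ℂ)+2)*((m:ℂ)+3)*((m:ℂ)+4)*((m:ℂ)+5))/4) * hs + (((m:ℂ))/4) * E02 + ((((m:ℂ)+5))/4) * E03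
  have E14 : q 1 ((m:ℤ)+4) ((m:ℤ)-3) * (((m:ℂ)+1)*((m:ℂ)+2)*((m:ℂ)+3)*((m:ℂ)+4)*((m:ℂ)+5)) = (-1:ℂ)^m * lam * (Nat.choose (2*m) m : ℂ) * (-((7/2)*(m:ℂ)*((m:ℂ)-1)*((m:ℂ)-2)*((m:ℂ)+5))) := by
    have hs := hR2 0 ((m:ℤ)+4) ((m:ℤ)-3) (by norm_num) (by norm_num) (by omega) (by omega) (by omega) (by omega)
    simp only [hr'] at hs
    simp only [show (0:ℤ)+1 = 1 from by norm_num, show ((m:ℤ)+4)-1 = ((m:ℤ)+3) from by ring, show ((m:ℤ)-3)-1 = ((m:ℤ)-4) from by ring] at hs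
    push_cast at hs
    linear_combination ((((m:ℂ)+1)*((m:ℂ)+2)*((m:ℂ)+3)*((m:ℂ)+4)*((m:ℂ)+5))/4) * hs + ((((m:ℂ)-1))/4) * E03 + ((((m:ℂ)+6))/4) * E04
  have E15 : q 1 ((m:ℤ)+5) ((m:ℤ)-4) * (((m:ℂ)+1)*((m:ℂ)+2)*((m:ℂ)+3)*((m:ℂ)+4)*((m:ℂ)+5)) = (-1:ℂ)^m * lam * (Nat.choose (2*m) m : ℂ) * ((9/2)*(m:ℂ)*((m:ℂ)-1)*((m:ℂ)-2)*((m:ℂ)-3)) := by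
    by_cases hm4 : 4 ≤ m
    · have hs := hR2 0 ((m:ℤ)+5) ((m:ℤ)-4) (by norm_num) (by norm_num) (by omega) (by omega) (by omega) (by omega)
      simp only [hr'] at hs
      simp only [show (0:ℤ)+1 = 1 from by norm_num, show ((m:ℤ)+5)-1 = ((m:ℤ)+4) from by ring, show ((m:ℤ)-4)-1 = ((m:ℤ)-5) from by ring] at hs
      push_cast at hs
      linear_combination ((((m:ℂ)+1)*((m:ℂ)+2)*((m:ℂ)+3)*((m:ℂ)+4)*((m:ℂ)+5))/4) * hs + ((((m:ℂ)-2))/4) * E04 + ((((m:ℂ)+7))/4) * E05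
    · have hm : m = 3 := by omega
      subst hm
      rw [hz 1 (((3:ℕ):ℤ)+5) (((3:ℕ):ℤ)-4) (by intro hcon; omega), zero_mul]
      push_cast
      norm_num
  have E23 : q 2 ((m:ℤ)+3) ((m:ℤ)-1) * (((m:ℂ)+1)*((m:ℂ)+2)*((m:ℂ)+3)*((m:ℂ)+4)*((m:ℂ)+5)) = (-1:ℂ)^m * lam * (Nat.choose (2*m) m : ℂ) * ((1/3)*(m:ℂ)*((m:ℂ)-2)*((m:ℂ)+4)*((m:ℂ)+5)*((m:ℂ)+5)) := by
    have hs := hR2 1 ((m:ℤ)+3) ((m:ℤ)-1) (by norm_num) (by norm_num) (by omega) (by omega) (by omega) (by omega)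
    simp only [hr'] at hs
    simp only [show (1:ℤ)+1 = 2 from by norm_num, show ((m:ℤ)+3)-1 = ((m:ℤ)+2) from by ring, show ((m:ℤ)-1)-1 = ((m:ℤ)-2) from by ring] at hs
    push_cast at hs
    linear_combination ((((m:ℂ)+1)*((m:ℂ)+2)*((m:ℂ)+3)*((m:ℂ)+4)*((m:ℂ)+5))/3) * hs + (((m:ℂ))/3) * E12 + ((((m:ℂ)+4))/3) * E13
  have E24 : q 2 ((m:ℤ)+4) ((m:ℤ)-2) * (((m:ℂ)+1)*((m:ℂ)+2)*((m:ℂ)+3)*((m:ℂ)+4)*((m:ℂ)+5)) = (-1:ℂ)^m * lam * (Nat.choose (2*m) m : ℂ) * (-(125/3)*(m:ℂ) + (115/3)*(m:ℂ)^2 + 6*(m:ℂ)^3 - (7/3)*(m:ℂ)^4 - (1/3)*(m:ℂ)^5) := by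
    have hs := hR2 1 ((m:ℤ)+4) ((m:ℤ)-2) (by norm_num) (by norm_num) (by omega) (by omega) (by omega) (by omega)
    simp only [hr'] at hs
    simp only [show (1:ℤ)+1 = 2 from by norm_num, show ((m:ℤ)+4)-1 = ((m:ℤ)+3) from by ring, show ((m:ℤ)-2)-1 = ((m:ℤ)-3) from by ring] at hs
    push_cast at hs
    linear_combination ((((m:ℂ)+1)*((m:ℂ)+2)*((m:ℂ)+3)*((m:ℂ)+4)*((m:ℂ)+5))/3) * hs + ((((m:ℂ)-1))/3) * E13 + ((((m:ℂ)+5))/3) * E14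
  have E25 : q 2 ((m:ℤ)+5) ((m:ℤ)-3) * (((m:ℂ)+1)*((m:ℂ)+2)*((m:ℂ)+3)*((m:ℂ)+4)*((m:ℂ)+5)) = (-1:ℂ)^m * lam * (Nat.choose (2*m) m : ℂ) * (-(92/3)*(m:ℂ) + 48*(m:ℂ)^2 - (53/3)*(m:ℂ)^3 + (1/3)*(m:ℂ)^5) := by
    have hs := hR2 1 ((m:ℤ)+5) ((m:ℤ)-3) (by norm_num) (by norm_num) (by omega) (by omega) (by omega) (by omega)
    simp only [hr'] at hs
    simp only [show (1:ℤ)+1 = 2 from by norm_num, show ((m:ℤ)+5)-1 = ((m:ℤ)+4) from by ring, show ((m:ℤ)-3)-1 = ((m:ℤ)-4) from by ring] at hs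
    push_cast at hs
    linear_combination ((((m:ℂ)+1)*((m:ℂ)+2)*((m:ℂ)+3)*((m:ℂ)+4)*((m:ℂ)+5))/3) * hs + ((((m:ℂ)-2))/3) * E14 + ((((m:ℂ)+6))/3) * E15
  have E34 : q 3 ((m:ℤ)+4) ((m:ℤ)-1) * (((m:ℂ)+1)*((m:ℂ)+2)*((m:ℂ)+3)*((m:ℂ)+4)*((m:ℂ)+5)) = (-1:ℂ)^m * lam * (Nat.choose (2*m) m : ℂ) * ((5/2)*(m:ℂ)*((m:ℂ)-1)*((m:ℂ)+4)*((m:ℂ)+5)) := by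
    have hs := hR2 2 ((m:ℤ)+4) ((m:ℤ)-1) (by norm_num) (by norm_num) (by omega) (by omega) (by omega) (by omega)
    simp only [hr'] at hs
    simp only [show (2:ℤ)+1 = 3 from by norm_num, show ((m:ℤ)+4)-1 = ((m:ℤ)+3) from by ring, show ((m:ℤ)-1)-1 = ((m:ℤ)-2) from by ring] at hs
    push_cast at hs
    linear_combination ((((m:ℂ)+1)*((m:ℂ)+2)*((m:ℂ)+3)*((m:ℂ)+4)*((m:ℂ)+5))/2) * hs + ((((m:ℂ)-1))/2) * E23 + ((((m:ℂ)+4))/2) * E24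
  have E35 : q 3 ((m:ℤ)+5) ((m:ℤ)-2) * (((m:ℂ)+1)*((m:ℂ)+2)*((m:ℂ)+3)*((m:ℂ)+4)*((m:ℂ)+5)) = (-1:ℂ)^m * lam * (Nat.choose (2*m) m : ℂ) * (-((7/2)*(m:ℂ)*((m:ℂ)-1)*((m:ℂ)-2)*((m:ℂ)+5))) := by
    have hs := hR2 2 ((m:ℤ)+5) ((m:ℤ)-2) (by norm_num) (by norm_num) (by omega) (by omega) (by omega) (by omega)
    simp only [hr'] at hs
    simp only [show (2:ℤ)+1 = 3 from by norm_num, show ((m:ℤ)+5)-1 = ((m:ℤ)+4) from by ring, show ((m:ℤ)-2)-1 = ((m:ℤ)-3) from by ring] at hs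
    push_cast at hs
    linear_combination ((((m:ℂ)+1)*((m:ℂ)+2)*((m:ℂ)+3)*((m:ℂ)+4)*((m:ℂ)+5))/2) * hs + ((((m:ℂ)-2))/2) * E24 + ((((m:ℂ)+5))/2) * E25
  have E45 : q 4 ((m:ℤ)+5) ((m:ℤ)-1) * (((m:ℂ)+1)*((m:ℂ)+2)*((m:ℂ)+3)*((m:ℂ)+4)*((m:ℂ)+5)) = (-1:ℂ)^m * lam * (Nat.choose (2*m) m : ℂ) * (-((m:ℂ)*((m:ℂ)-1)*((m:ℂ)-2)*((m:ℂ)+4)*((m:ℂ)+5))) := by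
    have hs := hR2 3 ((m:ℤ)+5) ((m:ℤ)-1) (by norm_num) (by norm_num) (by omega) (by omega) (by omega) (by omega)
    simp only [hr'] at hs
    simp only [show (3:ℤ)+1 = 4 from by norm_num, show ((m:ℤ)+5)-1 = ((m:ℤ)+4) from by ring, show ((m:ℤ)-1)-1 = ((m:ℤ)-2) from by ring] at hs
    push_cast at hs
    linear_combination ((((m:ℂ)+1)*((m:ℂ)+2)*((m:ℂ)+3)*((m:ℂ)+4)*((m:ℂ)+5))/1) * hs + ((((m:ℂ)-2))/1) * E34 + ((((m:ℂ)+4))/1) * E35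
  have hMne : ((m:ℂ)) ≠ 0 := Nat.cast_ne_zero.mpr (by omega)
  have hM1 : ((m:ℂ)-1) ≠ 0 := sub_ne_zero.mpr (by exact_mod_cast (by omega : m ≠ 1))
  have hM2 : ((m:ℂ)-2) ≠ 0 := sub_ne_zero.mpr (by exact_mod_cast (by omega : m ≠ 2))
  have hplus : ∀ a : ℕ, ((m:ℂ) + (a:ℂ)) ≠ 0 := by
    intro a
    have h : ((m:ℂ) + (a:ℂ)) = ((m+a:ℕ):ℂ) := by push_cast; ring
    rw [h]
    exact Nat.cast_ne_zero.mpr (by omega)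
  have hP1 : ((m:ℂ)+1) ≠ 0 := by simpa using hplus 1
  have hP2 : ((m:ℂ)+2) ≠ 0 := by simpa using hplus 2
  have hP3 : ((m:ℂ)+3) ≠ 0 := by simpa using hplus 3
  have hP4 : ((m:ℂ)+4) ≠ 0 := by simpa using hplus 4
  have hP5ne : ((m:ℂ)+5) ≠ 0 := by simpa using hplus 5
  have hProd : (((m:ℂ)+1)*((m:ℂ)+2)*((m:ℂ)+3)*((m:ℂ)+4)*((m:ℂ)+5)) ≠ 0 :=
    mul_ne_zero (mul_ne_zero (mul_ne_zero (mul_ne_zero hP1 hP2) hP3) hP4) hP5ne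
  have hBne : (Nat.choose (2*m) m : ℂ) ≠ 0 := Nat.cast_ne_zero.mpr (Nat.choose_pos (by omega)).ne'
  have hSne : ((-1:ℂ)^m) ≠ 0 := pow_ne_zero _ (by norm_num)
  have nz0 : q 0 ((m:ℤ)+1) ((m:ℤ)-1) ≠ 0 := by
    intro hq0
    rw [hq0, zero_mul] at E01
    have hN : (-((m:ℂ)*((m:ℂ)+2)*((m:ℂ)+3)*((m:ℂ)+4)*((m:ℂ)+5))) ≠ 0 := neg_ne_zero.mpr (mul_ne_zero (mul_ne_zero (mul_ne_zero (mul_ne_zero hMne hP2) hP3) hP4) hP5ne)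
    exact (mul_ne_zero (mul_ne_zero (mul_ne_zero hSne hlam) hBne) hN) E01.symm
  have nz1 : q 1 ((m:ℤ)+2) ((m:ℤ)-1) ≠ 0 := by
    intro hq0
    rw [hq0, zero_mul] at E12
    have hN : (-((3/2)*(m:ℂ)*((m:ℂ)+3)*((m:ℂ)+4)*((m:ℂ)+5))) ≠ 0 := neg_ne_zero.mpr (mul_ne_zero (mul_ne_zero (mul_ne_zero (mul_ne_zero (by norm_num : (3/2:ℂ) ≠ 0) hMne) hP3) hP4) hP5ne)
    exact (mul_ne_zero (mul_ne_zero (mul_ne_zero hSne hlam) hBne) hN) E12.symm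
  have nz2 : q 2 ((m:ℤ)+3) ((m:ℤ)-1) ≠ 0 := by
    intro hq0
    rw [hq0, zero_mul] at E23
    have hN : ((1/3)*(m:ℂ)*((m:ℂ)-2)*((m:ℂ)+4)*((m:ℂ)+5)*((m:ℂ)+5)) ≠ 0 := mul_ne_zero (mul_ne_zero (mul_ne_zero (mul_ne_zero (mul_ne_zero (by norm_num : (1/3:ℂ) ≠ 0) hMne) hM2) hP4) hP5ne) hP5ne
    exact (mul_ne_zero (mul_ne_zero (mul_ne_zero hSne hlam) hBne) hN) E23.symm
  have nz3 : q 3 ((m:ℤ)+4) ((m:ℤ)-1) ≠ 0 := by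
    intro hq0
    rw [hq0, zero_mul] at E34
    have hN : ((5/2)*(m:ℂ)*((m:ℂ)-1)*((m:ℂ)+4)*((m:ℂ)+5)) ≠ 0 := mul_ne_zero (mul_ne_zero (mul_ne_zero (mul_ne_zero (by norm_num : (5/2:ℂ) ≠ 0) hMne) hM1) hP4) hP5ne
    exact (mul_ne_zero (mul_ne_zero (mul_ne_zero hSne hlam) hBne) hN) E34.symm
  have nz4 : q 4 ((m:ℤ)+5) ((m:ℤ)-1) ≠ 0 := by
    intro hq0
    rw [hq0, zero_mul] at E45
    have hN : (-((m:ℂ)*((m:ℂ)-1)*((m:ℂ)-2)*((m:ℂ)+4)*((m:ℂ)+5))) ≠ 0 := neg_ne_zero.mpr (mul_ne_zero (mul_ne_zero (mul_ne_zero (mul_ne_zero hMne hM1) hM2) hP4) hP5ne)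
    exact (mul_ne_zero (mul_ne_zero (mul_ne_zero hSne hlam) hBne) hN) E45.symm
  constructor
  · intro k hk0 hk4
    refine Finset.sum_eq_zero fun i hi => Finset.sum_eq_zero fun j hj => ?_
    by_cases hpi : i = 0 ∨ i = (m:ℤ) - 1
    · by_cases hpj : j = 0 ∨ j = (m:ℤ) - 1
      · have hq0 : q k i j = 0 := hzero k i j hk0 hk4
          (by rcases hpi with rfl | rfl <;> rcases hpj with rfl | rfl <;> omega)
        rw [hq0, zero_mul, zero_mul]
      · simp only [pPoint]; rw [if_neg hpj]; ring
    · simp only [pPoint]; rw [if_neg hpi]; ring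
  · set J : Matrix (Fin 5) (Fin (r+1)) ℂ := Matrix.of fun (k : Fin 5) (i : Fin (r + 1)) =>
        2 * q ((k : ℕ) : ℤ) ((i : ℕ) : ℤ) (2 * (m : ℤ) + ((k : ℕ) : ℤ) - ((i : ℕ) : ℤ))
          * pPoint m (2 * (m : ℤ) + ((k : ℕ) : ℤ) - ((i : ℕ) : ℤ)) with hJ
    have hg5 : ∀ a : Fin 5, m + 1 + (a:ℕ) < r + 1 := by intro a; omega
    set g : Fin 5 → Fin (r+1) := fun a => ⟨m + 1 + (a:ℕ), hg5 a⟩ with hgdef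
    set Esel : Matrix (Fin (r+1)) (Fin 5) ℂ := Matrix.of fun i a => if i = g a then 1 else 0 with hE
    have hJE : J * Esel = Matrix.of fun a b => J a (g b) := by
      ext a b
      simp only [Matrix.mul_apply, hE, Matrix.of_apply, mul_ite, mul_one, mul_zero]
      rw [Finset.sum_ite_eq' Finset.univ (g b) (fun i => J a i)]
      simp
    have hentry : ∀ a b : Fin 5, (J * Esel) a b
        = 2 * q ((a:ℕ):ℤ) (((m + 1 + (b:ℕ) : ℕ)):ℤ) (2*(m:ℤ) + ((a:ℕ):ℤ) - ((m + 1 + (b:ℕ) : ℕ):ℤ))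
          * pPoint m (2*(m:ℤ) + ((a:ℕ):ℤ) - ((m + 1 + (b:ℕ) : ℕ):ℤ)) := by
      intro a b
      rw [hJE]
      simp only [Matrix.of_apply, hJ, hgdef]
    have htri : ∀ a b : Fin 5, (b:ℕ) < (a:ℕ) → (J * Esel) a b = 0 := by
      intro a b hab
      rw [hentry a b, pPoint]
      have ha5 : (a:ℕ) < 5 := a.isLt
      rw [if_neg (by push_cast; omega)]
      ring
    have hdiagval : ∀ a : Fin 5, (J * Esel) a a
        = 2 * q ((a:ℕ):ℤ) ((m:ℤ) + ((a:ℕ):ℤ) + 1) ((m:ℤ)-1) := by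
      intro a
      rw [hentry a a]
      have h1 : (((m + 1 + (a:ℕ) : ℕ)):ℤ) = (m:ℤ) + ((a:ℕ):ℤ) + 1 := by push_cast; ring
      have h2 : 2*(m:ℤ) + ((a:ℕ):ℤ) - ((m + 1 + (a:ℕ) : ℕ):ℤ) = (m:ℤ) - 1 := by push_cast; ring
      rw [h2, h1]; simp [pPoint]
    have hd0 : (J * Esel) 0 0 ≠ 0 := by
      rw [hdiagval 0]
      rw [show ((((0:Fin 5):ℕ)):ℤ) = 0 from rfl, show (m:ℤ) + 0 + 1 = (m:ℤ)+1 from by ring]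
      exact mul_ne_zero two_ne_zero nz0
    have hd1 : (J * Esel) 1 1 ≠ 0 := by
      rw [hdiagval 1]
      rw [show ((((1:Fin 5):ℕ)):ℤ) = 1 from rfl, show (m:ℤ) + 1 + 1 = (m:ℤ)+2 from by ring]
      exact mul_ne_zero two_ne_zero nz1
    have hd2 : (J * Esel) 2 2 ≠ 0 := by
      rw [hdiagval 2]
      rw [show ((((2:Fin 5):ℕ)):ℤ) = 2 from rfl, show (m:ℤ) + 2 + 1 = (m:ℤ)+3 from by ring]
      exact mul_ne_zero two_ne_zero nz2
    have hd3 : (J * Esel) 3 3 ≠ 0 := by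
      rw [hdiagval 3]
      rw [show ((((3:Fin 5):ℕ)):ℤ) = 3 from rfl, show (m:ℤ) + 3 + 1 = (m:ℤ)+4 from by ring]
      exact mul_ne_zero two_ne_zero nz3
    have hd4 : (J * Esel) 4 4 ≠ 0 := by
      rw [hdiagval 4]
      rw [show ((((4:Fin 5):ℕ)):ℤ) = 4 from rfl, show (m:ℤ) + 4 + 1 = (m:ℤ)+5 from by ring]
      exact mul_ne_zero two_ne_zero nz4
    have hdet : (J * Esel).det ≠ 0 := by
      rw [Matrix.det_of_upperTriangular (by intro a b h; exact htri a b h), Fin.prod_univ_five]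
      exact mul_ne_zero (mul_ne_zero (mul_ne_zero (mul_ne_zero hd0 hd1) hd2) hd3) hd4
    have hrank5 : (J * Esel).rank = 5 := by
      rw [Matrix.rank_of_isUnit _ ((Matrix.isUnit_iff_isUnit_det _).mpr (isUnit_iff_ne_zero.mpr hdet))]
      simp
    refine le_antisymm ?_ ?_
    · simpa using J.rank_le_card_height
    · calc (5:ℕ) = (J * Esel).rank := hrank5.symm
        _ ≤ J.rank := Matrix.rank_mul_le_left J Esel
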